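/- arXiv:0905.1459 — 2 statements merged into one kernel-verified Lean document; each statement's English description precedes it below -/
import Mathlib

section
/- Let Γ be a group and H a finite index subgroup. Suppose that for every finitely generated subgroup K of Γ, every ZK-module that is projective over Z(K ∩ H) is projective over ZK. Then every ZΓ-module M that is projective over ZH is flat over ZΓ. -/
open CategoryTheory MonoidAlgebra

noncomputable instance (R : Type) [Ring R] : HasExt.{1} (ModuleCat.{0} R) := by
  letI := HasDerivedCategory.standard (ModuleCat.{0} R)
  exact hasExt_of_hasDerivedCategory _

variable {Γ : Type} [Group Γ]

/-- The integral group ring. -/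
abbrev GR (Γ : Type) [Group Γ] : Type := MonoidAlgebra ℤ Γ

/-- The `ℤK`-module structure on a `ℤΓ`-module `M` obtained by restriction to
a subgroup `K ≤ Γ`. -/
noncomputable def resModule (K : Subgroup Γ) (M : Type) [AddCommGroup M]
    [Module (GR Γ) M] : Module (GR K) M :=
  Module.compHom M (mapDomainRingHom ℤ K.subtype)

/-- `M` is projective over the group ring of the subgroup `K`. -/
def IsProjOver (K : Subgroup Γ) (M : Type) [AddCommGroup M] [Module (GR Γ) M] : Prop :=
  letI := resModule K M
  Module.Projective (GR K) M

/-- Flatness of a left module over a possibly noncommutative ring, via the standard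
equational criterion (equivalent to the vanishing of `Tor₁`). -/
def IsFlatMod (R M : Type) [Ring R] [AddCommGroup M] [Module R M] : Prop :=
  ∀ (n : ℕ) (r : Fin n → R) (m : Fin n → M), (∑ j, r j • m j) = 0 →
    ∃ (l : ℕ) (a : Fin n → Fin l → R) (y : Fin l → M),
      (∀ j, m j = ∑ k, a j k • y k) ∧ ∀ k, (∑ j, r j * a j k) = 0

/-- Transfer projectivity between two (propositionally equal) module structures. -/
theorem proj_transfer {R M : Type} [Ring R] [AddCommGroup M] (I1 I2 : Module R M)
    (h : ∀ (r : R) (mm : M), (letI := I1; r • mm) = (letI := I2; r • mm))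
    (hp : @Module.Projective R _ M _ I1) : @Module.Projective R _ M _ I2 :=
  Module.ext' I1 I2 (fun r mm => h r mm) ▸ hp

/-- If `f : G →* G'` is an injective homomorphism of groups, then any module which is
projective over `ℤG'` is projective over `ℤG` (restriction of scalars), because `ℤG'`
is a free `ℤG`-module (decompose `G'` into right cosets of the image of `f`). -/
theorem projective_comap {G G' : Type} [Group G] [Group G'] (f : G →* G')
    (hf : Function.Injective f)
    (M : Type) [AddCommGroup M] [Module (GR G') M]
    (hp : Module.Projective (GR G') M) :
    letI := Module.compHom M (mapDomainRingHom ℤ f)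
    Module.Projective (GR G) M := by
  letI instM : Module (GR G) M := Module.compHom M (mapDomainRingHom ℤ f)
  letI instA : Module (GR G) (GR G') := Module.compHom _ (mapDomainRingHom ℤ f)
  set S : Subgroup G' := f.range with hS
  set T := Quotient (QuotientGroup.rightRel S) with hT
  set rep : T → G' := Quotient.out with hrep
  set π : G' → T := Quotient.mk'' with hπ
  have hrel : ∀ y : G', y * (rep (π y))⁻¹ ∈ S := by
    intro y
    have h1 : (Quotient.mk'' (rep (π y)) : T) = Quotient.mk'' y := Quotient.out_eq' _
    exact QuotientGroup.rightRel_apply.mp (Quotient.exact' h1)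
  choose σ hσ using fun y => MonoidHom.mem_range.mp (hrel y)
  have hπmul : ∀ (g : G) (y : G'), π (f g * y) = π y := by
    intro g y
    refine Quotient.sound' (QuotientGroup.rightRel_apply.mpr ?_)
    have : y * (f g * y)⁻¹ = (f g)⁻¹ := by group
    rw [this]
    exact S.inv_mem ⟨g, rfl⟩
  have hσmul : ∀ (g : G) (y : G'), σ (f g * y) = g * σ y := by
    intro g y
    apply hf
    rw [hσ, map_mul, hσ, hπmul]
    group
  have hπrep : ∀ t : T, π (rep t) = t := fun t => Quotient.out_eq' t
  have hσrep : ∀ t : T, σ (rep t) = 1 := by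
    intro t
    apply hf
    rw [hσ, hπrep, map_one, mul_inv_cancel]
  let e' : G' ≃ T × G :=
  { toFun := fun y => (π y, σ y)
    invFun := fun p => f p.2 * rep p.1
    left_inv := by intro y; simp only; rw [hσ]; group
    right_inv := by
      rintro ⟨t, g⟩
      simp only [hπmul, hπrep, hσmul, hσrep, mul_one] }
  set E0 : GR G' ≃ₗ[ℤ] (T →₀ GR G) :=
    (coeffLinearEquiv ℤ).trans ((Finsupp.domLCongr e').trans ((Finsupp.finsuppProdLEquiv ℤ).trans
      (Finsupp.mapRange.linearEquiv (coeffLinearEquiv ℤ).symm))) with hE0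
  have E0_single : ∀ (z : G') (c : ℤ),
      E0 (single z c) = Finsupp.single (π z) (single (σ z) c) := by
    intro z c
    rw [hE0, LinearEquiv.trans_apply]
    erw [show (coeffLinearEquiv ℤ) (single z c : GR G') = Finsupp.single z c from rfl]
    rw [LinearEquiv.trans_apply]
    erw [Finsupp.domLCongr_single]
    ext t g
    show ((Finsupp.single (e' z) c : T × G →₀ ℤ).curry t) g
      = ((Finsupp.single (π z) (single (σ z) c) : T →₀ GR G) t).coeff g
    rw [Finsupp.curry_apply]
    rw [show e' z = (π z, σ z) from rfl]
    classical
    simp [Finsupp.single_apply, MonoidAlgebra.coeff_single, Prod.ext_iff, ite_and,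
      apply_ite (fun (v : GR G) => v.coeff g)]
  set φ : GR G →+* GR G' := mapDomainRingHom ℤ f with hφdef
  have hφsingle : ∀ (g : G) (d : ℤ), φ (single g d) = single (f g) d := fun g d => by
    rw [hφdef]; exact MonoidAlgebra.mapDomain_single
  have hsm : ∀ (x : GR G) (y : GR G'), E0 (φ x * y) = x • E0 y := by
    intro x y
    induction y using MonoidAlgebra.induction_linear with
    | zero =>
      show E0 (φ x * (0 : GR G')) = x • E0 (0 : GR G')
      rw [mul_zero, map_zero, smul_zero]
    | add u v hu hv =>
      show E0 (φ x * (HAdd.hAdd (α := GR G') (β := GR G') (γ := GR G') u v))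
        = x • E0 (HAdd.hAdd (α := GR G') (β := GR G') (γ := GR G') u v)
      rw [mul_add, map_add, hu, hv, map_add, smul_add]
    | single y' c =>
      induction x using MonoidAlgebra.induction_linear with
      | zero =>
        show E0 (φ (0 : GR G) * single y' c) = (0 : GR G) • E0 (single y' c)
        rw [map_zero, zero_mul, map_zero, zero_smul]
      | add u v hu hv =>
        show E0 (φ (HAdd.hAdd (α := GR G) (β := GR G) (γ := GR G) u v) * single y' c)
          = (HAdd.hAdd (α := GR G) (β := GR G) (γ := GR G) u v) • E0 (single y' c)
        rw [map_add, add_mul, map_add, hu, hv, add_smul]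
      | single g d =>
        show E0 (φ (single g d) * single y' c) = (single g d : GR G) • E0 (single y' c)
        rw [hφsingle]
        rw [show (single (f g) d : GR G') * single y' c
            = single (f g * y') (d * c) from single_mul_single _ _ _ _]
        rw [E0_single, E0_single, hπmul, hσmul, Finsupp.smul_single]
        congr 1
        rw [show (single g d : GR G) • (single (σ y') c : GR G)
            = single g d * single (σ y') c from smul_eq_mul _ _]
        rw [show (single g d : GR G) * single (σ y') c
            = single (g * σ y') (d * c) from single_mul_single _ _ _ _]
  let E : GR G' ≃ₗ[GR G] (T →₀ GR G) :=
  { toFun := E0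
    map_add' := E0.map_add
    map_smul' := fun x y => hsm x y
    invFun := E0.symm
    left_inv := E0.left_inv
    right_inv := E0.right_inv }
  haveI hPA : Module.Projective (GR G) (GR G') := Module.Projective.of_equiv E.symm
  let E2 : (M →₀ GR G') ≃ₗ[GR G] (M × T →₀ GR G) :=
    (Finsupp.mapRange.linearEquiv E).trans (Finsupp.finsuppProdLEquiv (GR G)).symm
  haveI hPF : Module.Projective (GR G) (M →₀ GR G') := Module.Projective.of_equiv E2.symm
  obtain ⟨s, hs⟩ := Module.projective_def.mp hp
  let sG : M →ₗ[GR G] (M →₀ GR G') :=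
  { toFun := s
    map_add' := s.map_add
    map_smul' := fun x m => by
      show s (((mapDomainRingHom ℤ f) x : GR G') • m) = x • s m
      rw [s.map_smul]
      rfl }
  let tG : (M →₀ GR G') →ₗ[GR G] M :=
  { toFun := Finsupp.linearCombination (GR G') id
    map_add' := map_add _
    map_smul' := fun x v => by
      show Finsupp.linearCombination (GR G') id (((mapDomainRingHom ℤ f) x : GR G') • v)
        = ((mapDomainRingHom ℤ f) x : GR G') • Finsupp.linearCombination (GR G') id v
      rw [map_smul] }
  exact Module.Projective.of_split sG tG (LinearMap.ext fun m => hs m)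

theorem stmt6 {Γ : Type} [Group Γ] (H : Subgroup Γ) [H.FiniteIndex]
    (hyp : ∀ K : Subgroup Γ, K.FG →
      ∀ (P : Type) [AddCommGroup P] [Module (GR ↥K) P],
        IsProjOver (Γ := ↥K) (H.subgroupOf K) P → Module.Projective (GR ↥K) P)
    (M : Type) [AddCommGroup M] [Module (GR Γ) M]
    (hM : IsProjOver H M) :
    IsFlatMod (GR Γ) M := by
  intro n r m hsum
  classical
  -- the finitely generated subgroup generated by the supports of the `r j`
  set Sset : Set Γ := ⋃ j, ((r j).coeff.support : Set Γ) with hSset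
  have hSfin : Sset.Finite := Set.finite_iUnion fun j => (r j).coeff.support.finite_toSet
  set K : Subgroup Γ := Subgroup.closure Sset with hK
  have hKfg : K.FG := (Subgroup.fg_iff K).mpr ⟨Sset, rfl, hSfin⟩
  set φK : GR ↥K →+* GR Γ := mapDomainRingHom ℤ K.subtype with hφK
  -- lift the `r j` to the group ring of `K`
  have hlift : ∀ (v : GR Γ), (↑v.coeff.support : Set Γ) ⊆ (K : Set Γ) →
      φK (ofCoeff (Finsupp.subtypeDomain (· ∈ K) v.coeff)) = v := by
    intro v hv
    show MonoidAlgebra.mapDomain (K.subtype) (ofCoeff (Finsupp.subtypeDomain (· ∈ K) v.coeff)) = v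
    ext a
    show Finsupp.mapDomain (K.subtype) (Finsupp.subtypeDomain (· ∈ K) v.coeff) a = v.coeff a
    by_cases ha : a ∈ K
    · have := Finsupp.mapDomain_apply (f := fun x : ↥K => (K.subtype x : Γ))
        Subtype.coe_injective (Finsupp.subtypeDomain (· ∈ K) v.coeff) ⟨a, ha⟩
      simpa using this
    · rw [Finsupp.mapDomain_of_notMem_range]
      · exact (Finsupp.notMem_support_iff.mp fun hc => ha (hv hc)).symm
      · rintro ⟨⟨b, hb⟩, rfl⟩
        exact ha hb
  set r' : Fin n → GR ↥K := fun j => ofCoeff (Finsupp.subtypeDomain (· ∈ K) (r j).coeff) with hr'def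
  have hr' : ∀ j, φK (r' j) = r j := by
    intro j
    refine hlift (r j) ?_
    intro a ha
    exact Subgroup.subset_closure (Set.mem_iUnion.mpr ⟨j, ha⟩)
  letI instK : Module (GR ↥K) M := resModule K M
  have hKsmul : ∀ (x : GR ↥K) (mm : M), x • mm = φK x • mm := fun _ _ => rfl
  -- M is projective over ℤ(H ∩ K) hence over ℤK
  have hPK : Module.Projective (GR ↥K) M := by
    refine hyp K hKfg M ?_
    letI instH : Module (GR ↥H) M := resModule H M
    have hMH : Module.Projective (GR ↥H) M := hM
    let j : ↥(H.subgroupOf K) →* ↥H :=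
    { toFun := fun x => ⟨(x.1 : Γ), x.2⟩
      map_one' := rfl
      map_mul' := fun _ _ => rfl }
    have hj : Function.Injective j := by
      intro a b hab
      have h1 : ((j a : ↥H) : Γ) = ((j b : ↥H) : Γ) := congrArg Subtype.val hab
      exact Subtype.ext (Subtype.ext h1)
    have hPsub := projective_comap j hj M hMH
    show @Module.Projective (GR ↥(H.subgroupOf K)) _ M _
      (@resModule ↥K _ (H.subgroupOf K) M _ instK)
    refine proj_transfer _ _ ?_ hPsub
    intro x mm
    show (mapDomainRingHom ℤ H.subtype) ((mapDomainRingHom ℤ j) x) • mm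
      = (mapDomainRingHom ℤ K.subtype) ((mapDomainRingHom ℤ (H.subgroupOf K).subtype) x) • mm
    congr 1
    show ofCoeff (Finsupp.mapDomain H.subtype (Finsupp.mapDomain j x.coeff))
      = ofCoeff (Finsupp.mapDomain K.subtype (Finsupp.mapDomain (H.subgroupOf K).subtype x.coeff))
    rw [← Finsupp.mapDomain_comp, ← Finsupp.mapDomain_comp]
    rfl
  -- use projectivity of M over ℤK to obtain the equational criterion data
  obtain ⟨s, hs⟩ := Module.projective_def.mp hPK
  have hsum' : (∑ j, r' j • m j) = 0 := by
    rw [show (∑ j, r' j • m j) = ∑ j, r j • m j from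
      Finset.sum_congr rfl fun j _ => by rw [hKsmul, hr']]
    exact hsum
  set F : Finset M := Finset.univ.biUnion (fun j => (s (m j)).support) with hF
  set l : ℕ := F.card with hl
  set e : {x // x ∈ F} ≃ Fin l := F.equivFin with he
  refine ⟨l, fun j k => φK ((s (m j)) ((e.symm k : {x // x ∈ F}) : M)),
    fun k => ((e.symm k : {x // x ∈ F}) : M), ?_, ?_⟩
  · intro j
    have h1 : ∀ k : Fin l, φK ((s (m j)) ((e.symm k : {x // x ∈ F}) : M)) •
        ((e.symm k : {x // x ∈ F}) : M)
        = (s (m j)) ((e.symm k : {x // x ∈ F}) : M) • ((e.symm k : {x // x ∈ F}) : M) :=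
      fun k => rfl
    rw [Finset.sum_congr rfl fun k _ => h1 k]
    have h2 : ∑ k : Fin l, (s (m j)) ((e.symm k : {x // x ∈ F}) : M) •
        ((e.symm k : {x // x ∈ F}) : M)
        = ∑ x : {x // x ∈ F}, (s (m j)) (x : M) • (x : M) :=
      Equiv.sum_comp e.symm (fun x : {x // x ∈ F} => (s (m j)) (x : M) • (x : M))
    rw [h2, Finset.sum_coe_sort F (fun x => (s (m j)) x • x)]
    have h3 : ∑ x ∈ F, (s (m j)) x • x = ∑ x ∈ (s (m j)).support, (s (m j)) x • x := by
      refine (Finset.sum_subset ?_ ?_).symm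
      · intro x hx
        exact Finset.mem_biUnion.mpr ⟨j, Finset.mem_univ j, hx⟩
      · intro x _ hx
        rw [Finsupp.notMem_support_iff.mp hx, zero_smul]
    rw [h3]
    have h4 := hs (m j)
    rw [Finsupp.linearCombination_apply] at h4
    conv_lhs => rw [← h4]
    rfl
  · intro k
    have h1 : ∀ j, r j * φK ((s (m j)) ((e.symm k : {x // x ∈ F}) : M))
        = φK (r' j * (s (m j)) ((e.symm k : {x // x ∈ F}) : M)) := by
      intro j
      rw [map_mul, hr']
    rw [Finset.sum_congr rfl fun j _ => h1 j, ← map_sum]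
    have h2 : ∑ j, r' j * (s (m j)) ((e.symm k : {x // x ∈ F}) : M)
        = (∑ j, r' j • s (m j)) ((e.symm k : {x // x ∈ F}) : M) := by
      rw [Finset.sum_apply']
      refine Finset.sum_congr rfl fun j _ => ?_
      rw [Finsupp.smul_apply, smul_eq_mul]
    rw [h2]
    have h3 : (∑ j, r' j • s (m j)) = s (∑ j, r' j • m j) := by
      rw [map_sum]
      exact Finset.sum_congr rfl fun j _ => (s.map_smul _ _).symm
    rw [h3, hsum', map_zero]
    simp
end

section
/- Let φ : Γ → Γ' be an injective group homomorphism, H' ≤ Γ' a finite index subgroup, and set H = φ⁻¹(H'), with [Γ:H] finite. Suppose every ZΓ'-module projective over ZH' is projective over ZΓ'. Then every ZΓ-module M that is projective over ZH and such that the induced module ZΓ' ⊗_{ZΓ} M is projective over ZH', is projective over ZΓ. -/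
open CategoryTheory MonoidAlgebra

variable {Γ : Type} [Group Γ]

theorem projective_tower {A B P : Type} [Ring A] [Ring B] [AddCommGroup P]
    [Module B P] [Module A B] [Module A P] (f : A →+* B)
    (hBf : ∀ (a : A) (b : B), a • b = f a * b)
    (hPf : ∀ (a : A) (x : P), a • x = f a • x)
    (hB : Module.Projective A B) (hP : Module.Projective B P) :
    Module.Projective A P := by
  obtain ⟨sA, hsA⟩ := (Module.projective_def').mp hB
  obtain ⟨sB, hsB⟩ := (Module.projective_def').mp hP
  have smul_finsupp : ∀ (a : A) (g : P →₀ B), a • g = f a • g := by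
    intro a g; ext x; simp [hBf, smul_eq_mul]
  let sB' : P →ₗ[A] (P →₀ B) :=
    { toFun := sB
      map_add' := sB.map_add
      map_smul' := by
        intro a p
        simp only [RingHom.id_apply]
        rw [hPf, sB.map_smul, smul_finsupp] }
  let τ : (P →₀ B) →ₗ[A] (P →₀ A) :=
    Finsupp.lsum ℕ fun x => (Finsupp.lmapDomain A A (fun b : B => b • x)).comp sA
  refine (Module.projective_def').mpr ⟨τ.comp sB', ?_⟩
  have key : ∀ g : P →₀ B,
      Finsupp.linearCombination A id (τ g) = Finsupp.linearCombination B id g := by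
    intro g
    induction g using Finsupp.induction_linear with
    | zero => simp
    | add g₁ g₂ h₁ h₂ => simp [h₁, h₂]
    | single x b =>
      have : τ (Finsupp.single x b) = Finsupp.mapDomain (fun b' : B => b' • x) (sA b) := by
        simp [τ, Finsupp.lsum_single, Finsupp.lmapDomain_apply]
      rw [this, Finsupp.linearCombination_mapDomain]
      have hb : (sA b).sum (fun b' a => a • b') = b := by
        have := LinearMap.congr_fun hsA b
        simpa [Finsupp.linearCombination_apply] using this
      calc Finsupp.linearCombination A (id ∘ fun b' : B => b' • x) (sA b)
          = (sA b).sum (fun b' a => (a • b') • x) := by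
            rw [Finsupp.linearCombination_apply]
            refine Finsupp.sum_congr fun b' _ => ?_
            simp only [Function.comp_apply, id_eq]
            rw [hPf, hBf, mul_smul]
        _ = ((sA b).sum fun b' a => a • b') • x := by
            rw [Finsupp.sum, Finsupp.sum, Finset.sum_smul]
        _ = b • x := by rw [hb]
        _ = Finsupp.linearCombination B id (Finsupp.single x b) := by simp
  ext p
  simp only [LinearMap.comp_apply, LinearMap.id_apply]
  rw [key, show sB' p = sB p from rfl]
  exact LinearMap.congr_fun hsB p

lemma proj_groupring {Γ Γ' : Type} [Group Γ] [Group Γ'] (φ : Γ →* Γ')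
    (hφ : Function.Injective φ) [Module (GR Γ) (GR Γ')]
    (hBf : ∀ (a : GR Γ) (b : GR Γ'), a • b = mapDomainRingHom ℤ φ a * b) :
    Module.Projective (GR Γ) (GR Γ') := by
  classical
  set Q := Quotient (QuotientGroup.rightRel φ.range) with hQ
  let σ : Q → Γ' := Quotient.out
  have hmem : ∀ δ : Γ', δ * (σ (Quotient.mk _ δ))⁻¹ ∈ φ.range := by
    intro δ
    have : (QuotientGroup.rightRel φ.range) (σ (Quotient.mk _ δ)) δ :=
      Quotient.exact (Quotient.out_eq _)
    exact (QuotientGroup.rightRel_apply).mp this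
  let gg : Γ' → Γ := fun δ => (hmem δ).choose
  have hgg : ∀ δ, φ (gg δ) = δ * (σ (Quotient.mk _ δ))⁻¹ := fun δ => (hmem δ).choose_spec
  have hdec : ∀ δ : Γ', φ (gg δ) * σ (Quotient.mk _ δ) = δ := by
    intro δ; rw [hgg]; group
  have hclass : ∀ (g : Γ) (δ : Γ'), (Quotient.mk (QuotientGroup.rightRel φ.range) (φ g * δ))
      = Quotient.mk _ δ := by
    intro g δ
    refine Quotient.sound ((QuotientGroup.rightRel_apply).mpr ⟨g⁻¹, ?_⟩)
    rw [map_inv]; group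
  have hggmul : ∀ (g : Γ) (δ : Γ'), gg (φ g * δ) = g * gg δ := by
    intro g δ
    apply hφ
    rw [hgg, map_mul, hgg, hclass]
    group
  have hf_single : ∀ (g : Γ) (z : ℤ),
      mapDomainRingHom ℤ φ (MonoidAlgebra.single g z) = MonoidAlgebra.single (φ g) z := by
    intro g z
    simp [MonoidAlgebra.mapDomainRingHom_apply, MonoidAlgebra.mapDomain_single]
  -- the section
  let sAdd : GR Γ' →+ (GR Γ' →₀ GR Γ) :=
    (Finsupp.liftAddHom fun δ =>
      (Finsupp.singleAddHom (MonoidAlgebra.single (σ (Quotient.mk _ δ)) 1 : GR Γ')).comp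
        (MonoidAlgebra.singleAddHom (gg δ) : ℤ →+ GR Γ)).comp MonoidAlgebra.coeffAddEquiv.toAddMonoidHom
  have sAdd_single : ∀ (δ : Γ') (w : ℤ), sAdd (MonoidAlgebra.single δ w)
      = Finsupp.single (MonoidAlgebra.single (σ (Quotient.mk _ δ)) 1 : GR Γ')
          (MonoidAlgebra.single (gg δ) w : GR Γ) := by
    intro δ w
    rw [show sAdd (MonoidAlgebra.single δ w) = (Finsupp.singleAddHom
        (MonoidAlgebra.single (σ (Quotient.mk _ δ)) 1 : GR Γ')).comp
        (MonoidAlgebra.singleAddHom (gg δ) : ℤ →+ GR Γ) w from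
      Finsupp.liftAddHom_apply_single _ _ _]
    rfl
  let s : GR Γ' →ₗ[GR Γ] (GR Γ' →₀ GR Γ) :=
    { toFun := sAdd
      map_add' := sAdd.map_add
      map_smul' := by
        intro a b
        simp only [RingHom.id_apply]
        induction a using MonoidAlgebra.induction_linear with
        | zero => rw [zero_smul, sAdd.map_zero, zero_smul]
        | add a₁ a₂ h₁ h₂ => rw [add_smul, sAdd.map_add, h₁, h₂, add_smul]
        | single g z =>
          induction b using MonoidAlgebra.induction_linear with
          | zero => rw [smul_zero, sAdd.map_zero, smul_zero]
          | add b₁ b₂ h₁ h₂ => rw [smul_add, sAdd.map_add, h₁, h₂, sAdd.map_add, smul_add]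
          | single δ w =>
            rw [hBf, hf_single, MonoidAlgebra.single_mul_single,
              sAdd_single, sAdd_single, hclass, Finsupp.smul_single (M := GR Γ) (R := GR Γ), hggmul, smul_eq_mul,
              MonoidAlgebra.single_mul_single] }
  refine (Module.projective_def').mpr ⟨s, ?_⟩
  apply LinearMap.ext
  intro b
  simp only [LinearMap.comp_apply, LinearMap.id_apply]
  induction b using MonoidAlgebra.induction_linear with
  | zero => simp
  | add b₁ b₂ h₁ h₂ =>
    rw [show s (b₁ + b₂) = s b₁ + s b₂ from s.map_add _ _, map_add, h₁, h₂]
  | single δ w =>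
    rw [show s (MonoidAlgebra.single δ w) = sAdd (MonoidAlgebra.single δ w) from rfl, sAdd_single,
      Finsupp.linearCombination_single, id_eq, hBf, hf_single,
      MonoidAlgebra.single_mul_single, mul_one, hdec]

section Pi
variable {Γ Γ' : Type} [Group Γ] [Group Γ'] {φ : Γ →* Γ'} (hφ : Function.Injective φ)

/-- The bimodule retraction `ℤΓ' → ℤΓ`. -/
noncomputable def piAdd : GR Γ' →+ GR Γ :=
  MonoidAlgebra.comapDomainAddMonoidHom φ hφ

lemma piAdd_single_mem (g : Γ) (w : ℤ) :
    piAdd hφ (MonoidAlgebra.single (φ g) w) = MonoidAlgebra.single g w := by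
  show MonoidAlgebra.comapDomain φ hφ (MonoidAlgebra.single (φ g) w) = MonoidAlgebra.single g w
  exact MonoidAlgebra.comapDomain_single_map φ hφ g w

lemma piAdd_single_notmem {δ : Γ'} (h : δ ∉ Set.range φ) (w : ℤ) :
    piAdd hφ (MonoidAlgebra.single δ w) = 0 := by
  exact MonoidAlgebra.comapDomain_single_of_not_mem_range h hφ

lemma piAdd_one : piAdd hφ (1 : GR Γ') = (1 : GR Γ) := by
  have h := piAdd_single_mem hφ 1 1
  rw [map_one] at h
  rw [MonoidAlgebra.one_def, h, MonoidAlgebra.one_def]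

lemma piAdd_left (a : GR Γ) (b : GR Γ') :
    piAdd hφ (mapDomainRingHom ℤ φ a * b) = a * piAdd hφ b := by
  induction a using MonoidAlgebra.induction_linear with
  | zero => rw [map_zero, zero_mul, map_zero, zero_mul]
  | add a₁ a₂ h₁ h₂ => rw [map_add, add_mul, map_add, h₁, h₂, add_mul]
  | single g z =>
    induction b using MonoidAlgebra.induction_linear with
    | zero => simp
    | add b₁ b₂ h₁ h₂ => rw [mul_add, map_add, h₁, h₂, map_add, mul_add]
    | single δ w =>
      have hfs : mapDomainRingHom ℤ φ (MonoidAlgebra.single g z : GR Γ)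
          = (MonoidAlgebra.single (φ g) z : GR Γ') := by
        simp [MonoidAlgebra.mapDomain_single]
      rw [hfs, MonoidAlgebra.single_mul_single]
      by_cases h : δ ∈ Set.range φ
      · obtain ⟨d, rfl⟩ := h
        rw [← map_mul, piAdd_single_mem, piAdd_single_mem, MonoidAlgebra.single_mul_single]
      · have h' : φ g * δ ∉ Set.range φ := by
          rintro ⟨c, hc⟩
          exact h ⟨g⁻¹ * c, by rw [map_mul, map_inv, hc]; group⟩
        rw [piAdd_single_notmem hφ h', piAdd_single_notmem hφ h, mul_zero]

lemma piAdd_right (a : GR Γ) (b : GR Γ') :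
    piAdd hφ (b * mapDomainRingHom ℤ φ a) = piAdd hφ b * a := by
  induction a using MonoidAlgebra.induction_linear with
  | zero => rw [map_zero, mul_zero, map_zero, mul_zero]
  | add a₁ a₂ h₁ h₂ => rw [map_add, mul_add, map_add, h₁, h₂, mul_add]
  | single g z =>
    induction b using MonoidAlgebra.induction_linear with
    | zero => simp
    | add b₁ b₂ h₁ h₂ => rw [add_mul, map_add, h₁, h₂, map_add, add_mul]
    | single δ w =>
      have hfs : mapDomainRingHom ℤ φ (MonoidAlgebra.single g z : GR Γ)
          = (MonoidAlgebra.single (φ g) z : GR Γ') := by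
        simp [MonoidAlgebra.mapDomain_single]
      rw [hfs, MonoidAlgebra.single_mul_single]
      by_cases h : δ ∈ Set.range φ
      · obtain ⟨d, rfl⟩ := h
        rw [← map_mul, piAdd_single_mem, piAdd_single_mem, MonoidAlgebra.single_mul_single]
      · have h' : δ * φ g ∉ Set.range φ := by
          rintro ⟨c, hc⟩
          exact h ⟨c * g⁻¹, by rw [map_mul, map_inv, hc]; group⟩
        rw [piAdd_single_notmem hφ h', piAdd_single_notmem hφ h, zero_mul]

end Pi

section Coind

variable {Γ Γ' : Type} [Group Γ] [Group Γ'] (φ : Γ →* Γ') (M : Type) [AddCommGroup M]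
  [Module (GR Γ) M]

/-- The subgroup of `ℤΓ`-equivariant additive maps `ℤΓ' → M`. -/
def coindSub : AddSubgroup ((GR Γ') →+ M) where
  carrier := {h | ∀ (a : GR Γ) (b : GR Γ'), h (mapDomainRingHom ℤ φ a * b) = a • h b}
  add_mem' := by
    intro h₁ h₂ m₁ m₂ a b
    show h₁ _ + h₂ _ = a • (h₁ b + h₂ b)
    rw [m₁ a b, m₂ a b, smul_add]
  zero_mem' := by intro a b; show (0 : M) = a • (0 : M); rw [smul_zero]
  neg_mem' := by
    intro h hh a b
    show -(h _) = a • (-(h b))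
    rw [hh a b, smul_neg]

/-- The coinduced module `Hom_{ℤΓ}(ℤΓ', M)`. -/
def Coind : Type := ↥(coindSub φ M)

noncomputable instance : AddCommGroup (Coind φ M) :=
  inferInstanceAs (AddCommGroup ↥(coindSub φ M))

noncomputable instance : SMul (GR Γ') (Coind φ M) where
  smul s h := ⟨h.1.comp (AddMonoidHom.mulRight s), fun a b => by
    show h.1 (mapDomainRingHom ℤ φ a * b * s) = a • h.1 (b * s)
    rw [mul_assoc]
    exact h.2 a (b * s)⟩

lemma coind_smul_apply (s : GR Γ') (h : Coind φ M) (b : GR Γ') :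
    (s • h).1 b = h.1 (b * s) := rfl

noncomputable instance : Module (GR Γ') (Coind φ M) where
  one_smul h := Subtype.ext (AddMonoidHom.ext fun b => by
    show h.1 (b * 1) = h.1 b; rw [mul_one])
  mul_smul s t h := Subtype.ext (AddMonoidHom.ext fun b => by
    show h.1 (b * (s * t)) = h.1 (b * s * t); rw [mul_assoc])
  smul_zero s := Subtype.ext (AddMonoidHom.ext fun b => rfl)
  smul_add s h t := Subtype.ext (AddMonoidHom.ext fun b => rfl)
  add_smul s t h := Subtype.ext (AddMonoidHom.ext fun b => by
    show h.1 (b * (s + t)) = h.1 (b * s) + h.1 (b * t)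
    rw [mul_add, h.1.map_add])
  zero_smul h := Subtype.ext (AddMonoidHom.ext fun b => by
    show h.1 (b * 0) = 0; rw [mul_zero, h.1.map_zero])

end Coind


theorem stmt7 {Γ Γ' : Type} [Group Γ] [Group Γ'] (φ : Γ →* Γ')
    (hφ : Function.Injective φ)
    (H' : Subgroup Γ') [H'.FiniteIndex] [(H'.comap φ).FiniteIndex]
    -- every `ℤΓ'`-module projective over `ℤH'` is projective over `ℤΓ'`:
    (hyp : ∀ (P : Type) [AddCommGroup P] [Module (GR Γ') P],
      IsProjOver H' P → Module.Projective (GR Γ') P)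
    (M : Type) [AddCommGroup M] [Module (GR Γ) M]
    (hM : IsProjOver (H'.comap φ) M)
    -- `I`, together with the `ℤΓ`-equivariant map `u : M → I`, is the induced module
    -- `ℤΓ' ⊗_{ℤΓ} M`, characterized by its universal property:
    (I : Type) [AddCommGroup I] [Module (GR Γ') I] (u : M →+ I)
    (hu : ∀ (r : GR Γ) (m : M), u (r • m) = (mapDomainRingHom ℤ φ r) • u m)
    (huniv : ∀ (W : Type) [AddCommGroup W] [Module (GR Γ') W] (v : M →+ W),
      (∀ (r : GR Γ) (m : M), v (r • m) = (mapDomainRingHom ℤ φ r) • v m) →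
      ∃! w : I →+ W, (∀ (s : GR Γ') (x : I), w (s • x) = s • w x) ∧ w.comp u = v)
    -- the induced module is projective over `ℤH'`:
    (hI : IsProjOver H' I) :
    Module.Projective (GR Γ) M := by
  classical
  letI instAB : Module (GR Γ) (GR Γ') := Module.compHom _ (mapDomainRingHom ℤ φ)
  letI instAI : Module (GR Γ) I := Module.compHom _ (mapDomainRingHom ℤ φ)
  have hBf : ∀ (a : GR Γ) (b : GR Γ'), a • b = mapDomainRingHom ℤ φ a * b := fun _ _ => rfl
  have hPf : ∀ (a : GR Γ) (x : I), a • x = mapDomainRingHom ℤ φ a • x := fun _ _ => rfl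
  have projBI : Module.Projective (GR Γ') I := hyp I hI
  have projAB : Module.Projective (GR Γ) (GR Γ') := proj_groupring φ hφ hBf
  haveI projAI : Module.Projective (GR Γ) I :=
    projective_tower (mapDomainRingHom ℤ φ) hBf hPf projAB projBI
  -- the map `M → Coind φ M`, `m ↦ (b ↦ π(b) • m)`
  have hv_mem : ∀ m : M,
      (((smulAddHom (GR Γ) M).flip m).comp (piAdd hφ)) ∈ coindSub φ M := by
    intro m a b
    show piAdd hφ (mapDomainRingHom ℤ φ a * b) • m = a • (piAdd hφ b • m)
    rw [piAdd_left, mul_smul]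
  let v : M →+ Coind φ M :=
    { toFun := fun m => ⟨((smulAddHom (GR Γ) M).flip m).comp (piAdd hφ), hv_mem m⟩
      map_zero' := Subtype.ext (AddMonoidHom.ext fun b => by
        show piAdd hφ b • (0 : M) = (0 : M)
        rw [smul_zero])
      map_add' := fun m₁ m₂ => Subtype.ext (AddMonoidHom.ext fun b => by
        show piAdd hφ b • (m₁ + m₂) = piAdd hφ b • m₁ + piAdd hφ b • m₂
        rw [smul_add]) }
  have hv : ∀ (a : GR Γ) (m : M), v (a • m) = mapDomainRingHom ℤ φ a • v m := by
    intro a m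
    refine Subtype.ext (AddMonoidHom.ext fun b => ?_)
    show piAdd hφ b • (a • m) = piAdd hφ (b * mapDomainRingHom ℤ φ a) • m
    rw [piAdd_right, mul_smul]
  obtain ⟨w, ⟨hw1, hw2⟩, -⟩ := huniv (Coind φ M) v hv
  -- the splitting
  let i : M →ₗ[GR Γ] I :=
    { toFun := u
      map_add' := u.map_add
      map_smul' := fun a m => by rw [RingHom.id_apply]; exact hu a m }
  let s : I →ₗ[GR Γ] M :=
    { toFun := fun x => (w x).1 1
      map_add' := fun x y => by
        show (w (x + y)).1 1 = (w x).1 1 + (w y).1 1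
        rw [w.map_add]; rfl
      map_smul' := fun a x => by
        rw [RingHom.id_apply]
        show (w (mapDomainRingHom ℤ φ a • x)).1 1 = a • (w x).1 1
        rw [hw1]
        show (w x).1 (1 * mapDomainRingHom ℤ φ a) = a • (w x).1 1
        rw [one_mul, ← mul_one (mapDomainRingHom ℤ φ a)]
        exact (w x).2 a 1 }
  refine Module.Projective.of_split i s ?_
  apply LinearMap.ext
  intro m
  have h1 : w (u m) = v m := DFunLike.congr_fun hw2 m
  show (w (u m)).1 1 = m
  rw [h1]
  show piAdd hφ (1 : GR Γ') • m = m
  rw [piAdd_one, one_smul]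
end
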